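/- Fix X ∈ St(n,k) and tangent vectors A, B ∈ T_X St(n,k). Let P_Z(B) = (I − ZZᵀ)B + ½ Z(ZᵀB − BᵀZ) for Z ∈ ℝ^{n×k}, and let II_X(A,B) be the normal component (projection via I − P_X) of the directional derivative at Z = X in direction A of Z ↦ P_Z(B). Then II_X(A,B) = −½ X(AᵀB + BᵀA). -/

import Mathlib

open Matrix

attribute [local instance] Matrix.frobeniusNormedAddCommGroup Matrix.frobeniusNormedSpace

/-- The tangential projector of the Stiefel manifold at `Z`. -/
noncomputable def stiefelProj {n k : ℕ} (Z B : Matrix (Fin n) (Fin k) ℝ) :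
    Matrix (Fin n) (Fin k) ℝ :=
  (1 - Z * Zᵀ) * B + (1 / 2 : ℝ) • (Z * (Zᵀ * B - Bᵀ * Z))

noncomputable def stiefelBilin {n k : ℕ} (B : Matrix (Fin n) (Fin k) ℝ) :
    Matrix (Fin n) (Fin k) ℝ →ₗ[ℝ] Matrix (Fin n) (Fin k) ℝ →ₗ[ℝ] Matrix (Fin n) (Fin k) ℝ :=
  LinearMap.mk₂ ℝ (fun Y Z => Y * (Zᵀ * B + Bᵀ * Z))
    (fun Y₁ Y₂ Z => by simp [Matrix.add_mul])
    (fun c Y Z => by simp [Matrix.smul_mul])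
    (fun Y Z₁ Z₂ => by
      simp [Matrix.transpose_add, Matrix.add_mul, Matrix.mul_add]; abel)
    (fun c Y Z => by
      simp only [Matrix.transpose_smul, Matrix.smul_mul, Matrix.mul_smul, ← smul_add])

noncomputable def stiefelBilinCLM {n k : ℕ} (B : Matrix (Fin n) (Fin k) ℝ) :
    Matrix (Fin n) (Fin k) ℝ →L[ℝ]
      Matrix (Fin n) (Fin k) ℝ →L[ℝ] Matrix (Fin n) (Fin k) ℝ :=
  LinearMap.toContinuousLinearMap
    ((LinearMap.toContinuousLinearMap :
        (Matrix (Fin n) (Fin k) ℝ →ₗ[ℝ] Matrix (Fin n) (Fin k) ℝ) ≃ₗ[ℝ]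
        (Matrix (Fin n) (Fin k) ℝ →L[ℝ] Matrix (Fin n) (Fin k) ℝ)).toLinearMap.comp
      (stiefelBilin B))

lemma stiefelBilinCLM_apply {n k : ℕ} (B Y Z : Matrix (Fin n) (Fin k) ℝ) :
    stiefelBilinCLM B Y Z = Y * (Zᵀ * B + Bᵀ * Z) := rfl

lemma stiefelProj_eq {n k : ℕ} (Z B : Matrix (Fin n) (Fin k) ℝ) :
    stiefelProj Z B = B - (1 / 2 : ℝ) • (Z * (Zᵀ * B + Bᵀ * Z)) := by
  unfold stiefelProj
  rw [Matrix.sub_mul, Matrix.one_mul, Matrix.mul_sub, Matrix.mul_add, ← Matrix.mul_assoc]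
  module

theorem stiefel_second_fundamental_form (n k : ℕ)
    (X A B : Matrix (Fin n) (Fin k) ℝ) (hX : Xᵀ * X = 1)
    (hA : Xᵀ * A + Aᵀ * X = 0) (hB : Xᵀ * B + Bᵀ * X = 0)
    (D : Matrix (Fin n) (Fin k) ℝ →L[ℝ] Matrix (Fin n) (Fin k) ℝ)
    (hD : HasFDerivAt (fun Z : Matrix (Fin n) (Fin k) ℝ => stiefelProj Z B) D X) :
    (1 / 2 : ℝ) • (X * (Xᵀ * D A + (D A)ᵀ * X)) =
      -((1 / 2 : ℝ) • (X * (Aᵀ * B + Bᵀ * A))) := by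
  set c := stiefelBilinCLM B with hc
  have hbb : IsBoundedBilinearMap ℝ
      (fun p : Matrix (Fin n) (Fin k) ℝ × Matrix (Fin n) (Fin k) ℝ => c p.1 p.2) :=
    c.isBoundedBilinearMap
  have hdiag : HasFDerivAt (fun Z : Matrix (Fin n) (Fin k) ℝ => (Z, Z))
      ((ContinuousLinearMap.id ℝ _).prod (ContinuousLinearMap.id ℝ _)) X :=
    (hasFDerivAt_id X).prodMk (hasFDerivAt_id X)
  have hq : HasFDerivAt (fun Z : Matrix (Fin n) (Fin k) ℝ => c Z Z)
      ((hbb.deriv (X, X)).comp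
        ((ContinuousLinearMap.id ℝ _).prod (ContinuousLinearMap.id ℝ _))) X :=
    HasFDerivAt.comp (g := fun p : Matrix (Fin n) (Fin k) ℝ × Matrix (Fin n) (Fin k) ℝ => c p.1 p.2)
      (f := fun Z : Matrix (Fin n) (Fin k) ℝ => (Z, Z)) X (hbb.hasFDerivAt (X, X)) hdiag
  have hf : HasFDerivAt
      (fun Z : Matrix (Fin n) (Fin k) ℝ => B - (1 / 2 : ℝ) • (c Z Z))
      (0 -
        (1 / 2 : ℝ) • ((hbb.deriv (X, X)).comp
          ((ContinuousLinearMap.id ℝ _).prod (ContinuousLinearMap.id ℝ _)))) X :=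
    (hasFDerivAt_const B X).sub (hq.const_smul (1 / 2 : ℝ))
  have hf2 : HasFDerivAt (fun Z : Matrix (Fin n) (Fin k) ℝ => stiefelProj Z B)
      (0 -
        (1 / 2 : ℝ) • ((hbb.deriv (X, X)).comp
          ((ContinuousLinearMap.id ℝ _).prod (ContinuousLinearMap.id ℝ _)))) X := by
    have heq : (fun Z : Matrix (Fin n) (Fin k) ℝ => stiefelProj Z B)
        = fun Z => B - (1 / 2 : ℝ) • (c Z Z) := by
      funext Z; rw [stiefelProj_eq]; rfl
    rw [heq]; exact hf
  have hDeq := hD.unique hf2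
  have hDA : D A = -((1 / 2 : ℝ) • (X * (Aᵀ * B + Bᵀ * A))) := by
    rw [hDeq]
    show (0 : Matrix (Fin n) (Fin k) ℝ) - (1 / 2 : ℝ) • hbb.deriv (X, X) (A, A) = _
    rw [zero_sub]
    rw [hbb.deriv_apply]
    show -((1 / 2 : ℝ) • (c X A + c A X)) = _
    rw [stiefelBilinCLM_apply, stiefelBilinCLM_apply, hB, Matrix.mul_zero, add_zero]
  set C := Aᵀ * B + Bᵀ * A with hCdef
  have hC : Cᵀ = C := by
    rw [hCdef, Matrix.transpose_add, Matrix.transpose_mul, Matrix.transpose_mul,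
      Matrix.transpose_transpose, Matrix.transpose_transpose, add_comm]
  have h1 : Xᵀ * D A = -((1 / 2 : ℝ) • C) := by
    rw [hDA, Matrix.mul_neg, Matrix.mul_smul, ← Matrix.mul_assoc, hX, Matrix.one_mul]
  have h2 : (D A)ᵀ * X = -((1 / 2 : ℝ) • C) := by
    rw [hDA, Matrix.transpose_neg, Matrix.transpose_smul, Matrix.transpose_mul,
      Matrix.neg_mul, Matrix.smul_mul, Matrix.mul_assoc, hX, Matrix.mul_one, hC]
  rw [h1, h2]
  have : -((1 / 2 : ℝ) • C) + -((1 / 2 : ℝ) • C) = -C := by module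
  rw [this, Matrix.mul_neg, smul_neg]
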